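/- Suppose that f is a holomorphic self-map of the open unit disc D with f(0) = 0, and a, z are points of D with a ≠ 0 and z ≠ 0. Then sinh(½ρ(f(z), z)) ≤ (exp(ρ(a,z) + ρ(z,0)) / (4·sinh(½ρ(a,0)))) · sinh(½ρ(f(a), a)). -/

import Mathlib

open Complex Metric Set

noncomputable def mob (c w : ℂ) : ℂ := (w - c) / (1 - (starRingEnd ℂ) c * w)

lemma normSq_id (c w : ℂ) :
    Complex.normSq (1 - (starRingEnd ℂ) c * w) - Complex.normSq (w - c)
      = (1 - Complex.normSq c) * (1 - Complex.normSq w) := by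
  simp only [Complex.normSq_apply, Complex.sub_re, Complex.sub_im, Complex.mul_re, Complex.mul_im,
    Complex.one_re, Complex.one_im, Complex.conj_re, Complex.conj_im]
  ring

lemma sq_abs_id (c w : ℂ) :
    ‖1 - (starRingEnd ℂ) c * w‖ ^ 2 - ‖w - c‖ ^ 2
      = (1 - ‖c‖ ^ 2) * (1 - ‖w‖ ^ 2) := by
  simp only [Complex.sq_norm]
  exact normSq_id c w

lemma one_sub_conj_ne {c w : ℂ} (hc : ‖c‖ ≤ 1) (hw : ‖w‖ < 1) :
    (1 : ℂ) - (starRingEnd ℂ) c * w ≠ 0 := by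
  intro h
  have h1 : (1 : ℂ) = (starRingEnd ℂ) c * w := by linear_combination h
  have := congrArg norm h1
  simp only [norm_one, norm_mul, Complex.norm_conj] at this
  nlinarith [norm_nonneg c, norm_nonneg w]

lemma mob_lt_one {c w : ℂ} (hc : ‖c‖ < 1) (hw : ‖w‖ < 1) :
    ‖mob c w‖ < 1 := by
  have hne := one_sub_conj_ne hc.le hw
  have hpos : 0 < ‖1 - (starRingEnd ℂ) c * w‖ := by
    simpa [norm_pos_iff] using hne
  rw [mob, norm_div, div_lt_one hpos]
  have h := sq_abs_id c w
  have hc2 : ‖c‖ ^ 2 < 1 := by nlinarith [norm_nonneg c]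
  have hw2 : ‖w‖ ^ 2 < 1 := by nlinarith [norm_nonneg w]
  have h2 : ‖w - c‖ ^ 2 < ‖1 - (starRingEnd ℂ) c * w‖ ^ 2 := by
    nlinarith [mul_pos (sub_pos.2 hc2) (sub_pos.2 hw2)]
  exact lt_of_pow_lt_pow_left₀ 2 (norm_nonneg _) h2

lemma mob_self_inv {a z : ℂ} (ha : ‖a‖ < 1) (hz : ‖z‖ < 1) :
    mob (-a) (mob a z) = z := by
  have h1 : (1 : ℂ) - (starRingEnd ℂ) a * z ≠ 0 := one_sub_conj_ne ha.le hz
  have h2 : (1 : ℂ) - (starRingEnd ℂ) (-a) * (mob a z) ≠ 0 :=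
    one_sub_conj_ne (by simpa using ha.le) (mob_lt_one ha hz)
  have h3 : (1 : ℂ) - (starRingEnd ℂ) a * a ≠ 0 := by
    have := one_sub_conj_ne ha.le ha
    simpa using this
  have h3' : (1:ℂ) - a * (starRingEnd ℂ) a ≠ 0 := by rw [mul_comm]; exact h3
  have hw : mob a z * (1 - (starRingEnd ℂ) a * z) = z - a := by
    rw [mob]; exact div_mul_cancel₀ _ h1
  rw [mob, div_eq_iff h2, map_neg]
  linear_combination hw

lemma memb {w : ℂ} : w ∈ ball (0:ℂ) 1 ↔ ‖w‖ < 1 := by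
  rw [mem_ball_zero_iff]

lemma schwarz_pick {q : ℂ → ℂ} (hq : DifferentiableOn ℂ q (ball 0 1))
    (hb : ∀ w ∈ ball (0:ℂ) 1, ‖q w‖ ≤ 1) {a z : ℂ}
    (ha : ‖a‖ < 1) (hz : ‖z‖ < 1) :
    ‖q z - q a‖ * ‖1 - (starRingEnd ℂ) a * z‖
      ≤ ‖z - a‖ * ‖1 - (starRingEnd ℂ) (q a) * q z‖ := by
  by_cases hex : ∃ w ∈ ball (0:ℂ) 1, 1 ≤ ‖q w‖
  · obtain ⟨w0, hw0, hw0le⟩ := hex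
    have hmax : IsMaxOn (norm ∘ q) (ball (0:ℂ) 1) w0 := by
      refine isMaxOn_iff.mpr fun x hx => ?_
      simp only [Function.comp_apply]
      exact le_trans (hb x hx) hw0le
    have heq := Complex.eqOn_of_isPreconnected_of_isMaxOn_norm
      (convex_ball (0:ℂ) 1).isPreconnected isOpen_ball hq hw0 hmax
    have h1 : q z = q w0 := heq (memb.2 hz)
    have h2 : q a = q w0 := heq (memb.2 ha)
    rw [h1, h2, sub_self, norm_zero, zero_mul]
    positivity
  · push_neg at hex
    have hqa : ‖q a‖ < 1 := hex a (memb.2 ha)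
    have hnega : ‖-a‖ < 1 := by rwa [norm_neg]
    set g : ℂ → ℂ := fun w => q (mob (-a) w) with hgdef
    have hgmem : ∀ w ∈ ball (0:ℂ) 1, mob (-a) w ∈ ball (0:ℂ) 1 := fun w hw =>
      memb.2 (mob_lt_one hnega (memb.1 hw))
    have hgd : DifferentiableOn ℂ g (ball 0 1) := by
      refine hq.comp ?_ hgmem
      refine DifferentiableOn.div ?_ ?_ ?_
      · exact (differentiable_id.sub_const _).differentiableOn
      · exact ((differentiable_const _).sub ((differentiable_const _).mul
          differentiable_id)).differentiableOn
      · exact fun x hx => one_sub_conj_ne hnega.le (memb.1 hx)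
    have hglt : ∀ w ∈ ball (0:ℂ) 1, ‖g w‖ < 1 := fun w hw =>
      hex _ (hgmem w hw)
    set F : ℂ → ℂ := fun w => mob (q a) (g w) with hFdef
    have hFd : DifferentiableOn ℂ F (ball 0 1) := by
      refine DifferentiableOn.div (hgd.sub_const _) ?_ ?_
      · exact (differentiableOn_const _).sub ((differentiableOn_const _).mul hgd)
      · exact fun x hx => one_sub_conj_ne hqa.le (hglt x hx)
    have hFmaps : MapsTo F (ball (0:ℂ) 1) (ball (0:ℂ) 1) := fun w hw =>
      memb.2 (mob_lt_one hqa (hglt w hw))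
    have hF0 : F 0 = 0 := by
      have : mob (-a) 0 = a := by simp [mob]
      simp [hFdef, hgdef, this, mob]
    have hmz : ‖mob a z‖ < 1 := mob_lt_one ha hz
    have hS := Complex.norm_le_norm_of_mapsTo_ball hFd (hFmaps.mono_right ball_subset_closedBall) hF0 hmz
    have hFz : F (mob a z) = mob (q a) (q z) := by
      simp only [hFdef, hgdef, mob_self_inv ha hz]
    rw [hFz] at hS
    have hd1 : 0 < ‖1 - (starRingEnd ℂ) a * z‖ := by
      simpa [norm_pos_iff] using one_sub_conj_ne ha.le hz
    have hd2 : 0 < ‖1 - (starRingEnd ℂ) (q a) * q z‖ := by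
      simpa [norm_pos_iff] using one_sub_conj_ne hqa.le (hex z (memb.2 hz))
    rw [mob, mob, norm_div, norm_div, div_le_div_iff₀ hd2 hd1] at hS
    exact hS

/-- The hyperbolic metric on the open unit disc:
`ρ(u,v) = 2 · arsinh (|u − v| / √((1 − |u|²)(1 − |v|²)))`. -/
noncomputable def rho (u v : ℂ) : ℝ :=
  2 * Real.arsinh (‖u - v‖ /
    Real.sqrt ((1 - ‖u‖ ^ 2) * (1 - ‖v‖ ^ 2)))

lemma sinh_rho_half (u v : ℂ) : Real.sinh (rho u v / 2) =
    ‖u - v‖ / Real.sqrt ((1 - ‖u‖ ^ 2) * (1 - ‖v‖ ^ 2)) := by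
  rw [rho, mul_div_cancel_left₀ _ (two_ne_zero : (2:ℝ) ≠ 0), Real.sinh_arsinh]

lemma exp_rho (u v : ℂ) (hu : ‖u‖ < 1) (hv : ‖v‖ < 1) :
    Real.exp (rho u v) =
      (‖1 - (starRingEnd ℂ) u * v‖ + ‖u - v‖) /
        (‖1 - (starRingEnd ℂ) u * v‖ - ‖u - v‖) := by
  set d := ‖u - v‖ with hd
  set nn := ‖1 - (starRingEnd ℂ) u * v‖ with hnn
  have hu0 := norm_nonneg u
  have hv0 := norm_nonneg v
  have hprod : 0 < (1 - ‖u‖ ^ 2) * (1 - ‖v‖ ^ 2) :=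
    mul_pos (by nlinarith) (by nlinarith)
  set s := Real.sqrt ((1 - ‖u‖ ^ 2) * (1 - ‖v‖ ^ 2)) with hs
  have hs0 : 0 < s := Real.sqrt_pos.2 hprod
  have hs2 : s ^ 2 = (1 - ‖u‖ ^ 2) * (1 - ‖v‖ ^ 2) :=
    Real.sq_sqrt hprod.le
  have hvu : ‖v - u‖ = d := by rw [hd]; exact norm_sub_rev v u
  have hn2 : nn ^ 2 = s ^ 2 + d ^ 2 := by
    have h := sq_abs_id u v
    rw [hvu] at h
    rw [hs2]; linarith
  have hd0 : 0 ≤ d := norm_nonneg _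
  have hdn : d < nn := by
    refine lt_of_pow_lt_pow_left₀ 2 (norm_nonneg _) ?_
    nlinarith
  rw [rho, two_mul, Real.exp_add, Real.exp_arsinh]
  have h1 : 1 + (d / s) ^ 2 = (nn / s) ^ 2 := by
    field_simp
    linarith
  rw [h1, Real.sqrt_sq (by positivity), ← add_div]
  rw [div_mul_div_comm,
    div_eq_div_iff (ne_of_gt (by positivity : (0:ℝ) < s * s)) (by intro h; nlinarith [h] : nn - d ≠ 0)]
  linear_combination (nn + d) * hn2

lemma final_real (u v dd nn az zz sA sQa sQz : ℝ)
    (hu0 : 0 ≤ u) (hv0 : 0 ≤ v) (hd0 : 0 ≤ dd) (hdn : dd < nn)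
    (haz0 : 0 < az) (hzz0 : 0 < zz) (hzz1 : zz < 1)
    (hsa0 : 0 < sA) (hQa0 : 0 < sQa) (hQz0 : 0 < sQz)
    (hQa_le : sQa ≤ sA) (hQz_ge : 1 - zz ^ 2 ≤ sQz)
    (key : (nn - dd) * u ≤ (nn + dd) * v) :
    zz * u / sQz ≤ ((nn + dd) / (nn - dd) * ((1 + zz) / (1 - zz)) / (4 * (az / sA)))
      * (az * v / sQa) := by
  have hzz2 : 0 < 1 - zz ^ 2 := by nlinarith
  have hnd0 : 0 < nn - dd := by linarith
  have hz' : (0:ℝ) < 1 - zz := by linarith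
  have hpos : (0:ℝ) < (nn + dd) / (nn - dd) * ((1 + zz) / (1 - zz)) / (4 * (az / sA)) :=
    div_pos (mul_pos (div_pos (by linarith) hnd0) (div_pos (by linarith) hz'))
      (by positivity)
  calc zz * u / sQz
      ≤ zz * u / (1 - zz ^ 2) := by
        gcongr
    _ ≤ ((nn + dd) / (nn - dd) * ((1 + zz) / (1 - zz)) / (4 * (az / sA))) * (az * v / sA) := by
        have hC : ((nn + dd) / (nn - dd) * ((1 + zz) / (1 - zz)) / (4 * (az / sA)))
            * (az * v / sA) = ((nn + dd) * (1 + zz) * v) / ((nn - dd) * (1 - zz) * 4) := by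
          field_simp [hnd0.ne', hz'.ne', haz0.ne', hsa0.ne']
        rw [hC, div_le_div_iff₀ hzz2 (by nlinarith : (0:ℝ) < (nn - dd) * (1 - zz) * 4)]
        have h3 : 0 ≤ (1 + zz) ^ 2 * ((nn + dd) * v) - 4 * zz * ((nn - dd) * u) := by
          have h1 := mul_le_mul_of_nonneg_left key (by positivity : (0:ℝ) ≤ (1 + zz) ^ 2)
          have h2 : 4 * zz * ((nn - dd) * u) ≤ (1 + zz) ^ 2 * ((nn - dd) * u) := by
            apply mul_le_mul_of_nonneg_right _ (mul_nonneg hnd0.le hu0)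
            nlinarith [sq_nonneg (1 - zz)]
          linarith
        nlinarith [mul_nonneg (by linarith : (0:ℝ) ≤ 1 - zz) h3]
    _ ≤ ((nn + dd) / (nn - dd) * ((1 + zz) / (1 - zz)) / (4 * (az / sA)))
          * (az * v / sQa) := by
        apply mul_le_mul_of_nonneg_left _ hpos.le
        gcongr

set_option maxHeartbeats 2000000 in
/-- One-point inequality, in terms of `sinh`, for a holomorphic self-map of the
disc fixing the origin. -/
theorem one_point_sinh_inequality_origin (f : ℂ → ℂ)
    (hf : DifferentiableOn ℂ f (ball (0:ℂ) 1))
    (hmaps : MapsTo f (ball (0:ℂ) 1) (ball (0:ℂ) 1))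
    (hfix : f 0 = 0)
    (a z : ℂ) (ha : a ∈ ball (0:ℂ) 1) (hz : z ∈ ball (0:ℂ) 1)
    (ha0 : a ≠ 0) (hz0 : z ≠ 0) :
    Real.sinh (rho (f z) z / 2) ≤
      (Real.exp (rho a z + rho z 0) / (4 * Real.sinh (rho a 0 / 2))) *
        Real.sinh (rho (f a) a / 2) := by
  have ha1 : ‖a‖ < 1 := memb.1 ha
  have hz1 : ‖z‖ < 1 := memb.1 hz
  have haz0 : 0 < ‖a‖ := norm_pos_iff.mpr ha0
  have hzz0 : 0 < ‖z‖ := norm_pos_iff.mpr hz0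
  -- Schwarz for f
  have hfza : ‖f z‖ ≤ ‖z‖ :=
    Complex.norm_le_norm_of_mapsTo_ball hf (hmaps.mono_right ball_subset_closedBall) hfix hz1
  have hfaa : ‖f a‖ ≤ ‖a‖ :=
    Complex.norm_le_norm_of_mapsTo_ball hf (hmaps.mono_right ball_subset_closedBall) hfix ha1
  -- the function q = f(w)/w
  set q : ℂ → ℂ := dslope f 0 with hqdef
  have hqd : DifferentiableOn ℂ q (ball 0 1) :=
    (differentiableOn_dslope (isOpen_ball.mem_nhds (mem_ball_self one_pos))).mpr hf
  have hmaps' : MapsTo f (ball (0:ℂ) 1) (ball (f 0) 1) := by rwa [hfix]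
  have hqb : ∀ w ∈ ball (0:ℂ) 1, ‖q w‖ ≤ 1 := by
    intro w hw
    have := Complex.norm_dslope_le_div_of_mapsTo_ball hf (hmaps'.mono_right ball_subset_closedBall) hw
    simpa using this
  have hqzv : q z = f z / z := by
    rw [hqdef, dslope_of_ne _ hz0, slope_def_field, hfix, sub_zero, sub_zero]
  have hqav : q a = f a / a := by
    rw [hqdef, dslope_of_ne _ ha0, slope_def_field, hfix, sub_zero, sub_zero]
  have hfzz : f z - z = z * (q z - 1) := by
    rw [hqzv, mul_sub, mul_one, mul_div_cancel₀ _ hz0]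
  have hfaa' : f a - a = a * (q a - 1) := by
    rw [hqav, mul_sub, mul_one, mul_div_cancel₀ _ ha0]
  -- key inequality
  have SP := schwarz_pick hqd hqb ha1 hz1
  have hqz1 : ‖q z‖ ≤ 1 := hqb z hz
  have hqa1 : ‖q a‖ ≤ 1 := hqb a ha
  have tri1 : ‖q z - 1‖ ≤ ‖q a - 1‖ + ‖q z - q a‖ := by
    have h : q z - 1 = (q a - 1) + (q z - q a) := by ring
    rw [h]; exact norm_add_le _ _
  have tri2 : ‖1 - (starRingEnd ℂ) (q a) * q z‖
      ≤ ‖q z - 1‖ + ‖q a - 1‖ := by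
    have h : 1 - (starRingEnd ℂ) (q a) * q z
        = (1 - q z) + q z * (1 - (starRingEnd ℂ) (q a)) := by ring
    have e1 : ‖1 - q z‖ = ‖q z - 1‖ := norm_sub_rev _ _
    have e2 : ‖1 - (starRingEnd ℂ) (q a)‖ = ‖q a - 1‖ := by
      rw [show (1:ℂ) - (starRingEnd ℂ) (q a) = (starRingEnd ℂ) (1 - q a) by
        rw [map_sub, map_one], Complex.norm_conj]
      exact norm_sub_rev _ _
    calc ‖1 - (starRingEnd ℂ) (q a) * q z‖
        ≤ ‖1 - q z‖ + ‖q z * (1 - (starRingEnd ℂ) (q a))‖ := by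
          rw [h]; exact norm_add_le _ _
      _ = ‖q z - 1‖ + ‖q z‖ * ‖q a - 1‖ := by
          rw [norm_mul, e1, e2]
      _ ≤ ‖q z - 1‖ + 1 * ‖q a - 1‖ := by
          gcongr
      _ = ‖q z - 1‖ + ‖q a - 1‖ := by rw [one_mul]
  have hza : ‖z - a‖ = ‖a - z‖ := norm_sub_rev _ _
  have hnd2 := sq_abs_id a z
  have hd0 : 0 ≤ ‖a - z‖ := norm_nonneg _
  have hdn : ‖a - z‖ < ‖1 - (starRingEnd ℂ) a * z‖ := by
    refine lt_of_pow_lt_pow_left₀ 2 (norm_nonneg _) ?_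
    rw [← hza]
    nlinarith [hnd2, mul_pos (show (0:ℝ) < 1 - ‖a‖ ^ 2 by
      nlinarith [norm_nonneg a]) (show (0:ℝ) < 1 - ‖z‖ ^ 2 by
      nlinarith [norm_nonneg z])]
  have hn0 : 0 < ‖1 - (starRingEnd ℂ) a * z‖ := lt_of_le_of_lt hd0 hdn
  rw [hza] at SP
  have key : (‖1 - (starRingEnd ℂ) a * z‖ - ‖a - z‖)
        * ‖q z - 1‖
      ≤ (‖1 - (starRingEnd ℂ) a * z‖ + ‖a - z‖)
        * ‖q a - 1‖ := by
    nlinarith [SP, mul_le_mul_of_nonneg_left tri1 hn0.le, mul_le_mul_of_nonneg_left tri2 hd0,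
      norm_nonneg (q z - q a), norm_nonneg (q z - 1), norm_nonneg (q a - 1)]
  -- transcendental rewrites
  rw [sinh_rho_half (f z) z, sinh_rho_half (f a) a, Real.exp_add, exp_rho a z ha1 hz1]
  have E0 : Real.exp (rho z 0) = (1 + ‖z‖) / (1 - ‖z‖) := by
    rw [exp_rho z 0 hz1 (by simp)]; simp
  have S0 : Real.sinh (rho a 0 / 2) = ‖a‖ / Real.sqrt (1 - ‖a‖ ^ 2) := by
    rw [sinh_rho_half]; simp
  rw [E0, S0, hfzz, hfaa', norm_mul, norm_mul]
  -- now a purely real inequality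
  set u := ‖q z - 1‖ with hu
  set v := ‖q a - 1‖ with hv
  set dd := ‖a - z‖ with hdd
  set nn := ‖1 - (starRingEnd ℂ) a * z‖ with hnn
  set az := ‖a‖
  set zz := ‖z‖
  set fa := ‖f a‖
  set fz := ‖f z‖
  have hu0 : 0 ≤ u := norm_nonneg _
  have hv0 : 0 ≤ v := norm_nonneg _
  have hfa0 : 0 ≤ fa := norm_nonneg _
  have hfz0 : 0 ≤ fz := norm_nonneg _
  have hsa0 : 0 < Real.sqrt (1 - az ^ 2) := Real.sqrt_pos.2 (by nlinarith)
  have hsa2 : Real.sqrt (1 - az ^ 2) ^ 2 = 1 - az ^ 2 := Real.sq_sqrt (by nlinarith)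
  have hQa0 : 0 < Real.sqrt ((1 - fa ^ 2) * (1 - az ^ 2)) :=
    Real.sqrt_pos.2 (mul_pos (by nlinarith) (by nlinarith))
  have hQz0 : 0 < Real.sqrt ((1 - fz ^ 2) * (1 - zz ^ 2)) :=
    Real.sqrt_pos.2 (mul_pos (by nlinarith) (by nlinarith))
  have hQa_le : Real.sqrt ((1 - fa ^ 2) * (1 - az ^ 2)) ≤ Real.sqrt (1 - az ^ 2) := by
    apply Real.sqrt_le_sqrt
    nlinarith
  have hQz_ge : 1 - zz ^ 2 ≤ Real.sqrt ((1 - fz ^ 2) * (1 - zz ^ 2)) := by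
    have h1 : ((1:ℝ) - zz ^ 2) * (1 - zz ^ 2) ≤ (1 - fz ^ 2) * (1 - zz ^ 2) := by
      nlinarith [mul_nonneg (show (0:ℝ) ≤ zz ^ 2 - fz ^ 2 by nlinarith)
        (show (0:ℝ) ≤ 1 - zz ^ 2 by nlinarith)]
    calc (1:ℝ) - zz ^ 2 = Real.sqrt ((1 - zz ^ 2) * (1 - zz ^ 2)) :=
          (Real.sqrt_mul_self (by nlinarith)).symm
      _ ≤ _ := Real.sqrt_le_sqrt h1
  exact final_real u v dd nn az zz (Real.sqrt (1 - az ^ 2))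
    (Real.sqrt ((1 - fa ^ 2) * (1 - az ^ 2))) (Real.sqrt ((1 - fz ^ 2) * (1 - zz ^ 2)))
    hu0 hv0 hd0 hdn haz0 hzz0 hz1 hsa0 hQa0 hQz0 hQa_le hQz_ge key
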